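/- There exists t₀ < 0 such that the derivative of φ(t) = t·tanh(eᵗ) vanishes at t₀, and φ' is negative for t < t₀ and positive for t > t₀; in particular the zero of φ' is unique. -/

import Mathlib

open Real

noncomputable def telu : ℝ → ℝ := fun t => t * Real.tanh (Real.exp t)

/-- Auxiliary function whose sign equals the sign of `deriv telu`. -/
noncomputable def teluAux : ℝ → ℝ := fun t =>
  Real.sinh (Real.exp t) * Real.cosh (Real.exp t) / Real.exp t + t

lemma sinh_le_mul_cosh {x : ℝ} (hx : 0 ≤ x) : Real.sinh x ≤ x * Real.cosh x := by
  have key : MonotoneOn (fun y : ℝ => y * Real.cosh y - Real.sinh y) (Set.Ici 0) := by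
    apply monotoneOn_of_deriv_nonneg (convex_Ici 0)
    · exact ((continuous_id.mul Real.continuous_cosh).sub Real.continuous_sinh).continuousOn
    · intro y _
      have hd := ((hasDerivAt_id y).mul (Real.hasDerivAt_cosh y)).sub (Real.hasDerivAt_sinh y)
      simp only [id_eq, one_mul] at hd
      exact hd.differentiableAt.differentiableWithinAt
    · intro y hy
      rw [interior_Ici, Set.mem_Ioi] at hy
      have hd := ((hasDerivAt_id y).mul (Real.hasDerivAt_cosh y)).sub (Real.hasDerivAt_sinh y)
      simp only [id_eq, one_mul] at hd
      rw [show (fun y : ℝ => y * Real.cosh y - Real.sinh y) = id * Real.cosh - Real.sinh from rfl, hd.deriv]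
      have : 0 ≤ Real.sinh y := Real.sinh_nonneg_iff.mpr hy.le
      nlinarith
  have h0 := key (Set.self_mem_Ici) hx hx
  simp at h0
  linarith

lemma hasDerivAt_teluAux (t : ℝ) :
    HasDerivAt teluAux
      (((Real.cosh (Real.exp t) * Real.exp t * Real.cosh (Real.exp t) +
          Real.sinh (Real.exp t) * (Real.sinh (Real.exp t) * Real.exp t)) * Real.exp t -
          Real.sinh (Real.exp t) * Real.cosh (Real.exp t) * Real.exp t) / Real.exp t ^ 2 + 1) t := by
  have h1 := Real.hasDerivAt_exp t
  have h2 : HasDerivAt (fun s => Real.sinh (Real.exp s)) (Real.cosh (Real.exp t) * Real.exp t) t :=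
    (Real.hasDerivAt_sinh (Real.exp t)).comp t h1
  have h3 : HasDerivAt (fun s => Real.cosh (Real.exp s)) (Real.sinh (Real.exp t) * Real.exp t) t :=
    (Real.hasDerivAt_cosh (Real.exp t)).comp t h1
  have h4 := ((h2.mul h3).div h1 (Real.exp_ne_zero t)).add (hasDerivAt_id t)
  simp at h4; exact h4

lemma teluAux_strictMono : StrictMono teluAux := by
  apply strictMono_of_deriv_pos
  intro x
  rw [(hasDerivAt_teluAux x).deriv]
  set u := Real.exp x with hu
  have hu0 : 0 < u := Real.exp_pos x
  have hc : 0 < Real.cosh u := Real.cosh_pos u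
  have hs : 0 ≤ Real.sinh u := Real.sinh_nonneg_iff.mpr hu0.le
  have key : Real.sinh u ≤ u * Real.cosh u := sinh_le_mul_cosh hu0.le
  have heq : ((Real.cosh u * u * Real.cosh u + Real.sinh u * (Real.sinh u * u)) * u -
      Real.sinh u * Real.cosh u * u) / u ^ 2 + 1 =
      (u * (Real.cosh u ^ 2 + Real.sinh u ^ 2 + 1) - Real.sinh u * Real.cosh u) / u := by
    field_simp
    ring
  rw [heq]
  apply div_pos _ hu0
  nlinarith [sq_nonneg (Real.sinh u), mul_le_mul_of_nonneg_right key hc.le]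

lemma deriv_telu (t : ℝ) :
    deriv telu t = Real.exp t / Real.cosh (Real.exp t) ^ 2 * teluAux t := by
  have h1 := Real.hasDerivAt_exp t
  have h2 : HasDerivAt (fun s => Real.sinh (Real.exp s)) (Real.cosh (Real.exp t) * Real.exp t) t :=
    (Real.hasDerivAt_sinh (Real.exp t)).comp t h1
  have h3 : HasDerivAt (fun s => Real.cosh (Real.exp s)) (Real.sinh (Real.exp t) * Real.exp t) t :=
    (Real.hasDerivAt_cosh (Real.exp t)).comp t h1
  have h4 := (hasDerivAt_id t).mul
    (h2.div h3 (Real.cosh_pos (Real.exp t)).ne')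
  have htelu : telu = fun s => s * (Real.sinh (Real.exp s) / Real.cosh (Real.exp s)) := by
    funext s; simp [telu, Real.tanh_eq_sinh_div_cosh]
  simp only [id_eq, one_mul] at h4
  rw [htelu, show (fun s : ℝ => s * (Real.sinh (Real.exp s) / Real.cosh (Real.exp s))) = id * ((fun s => Real.sinh (Real.exp s)) / fun s => Real.cosh (Real.exp s)) from rfl, h4.deriv, Pi.div_apply]
  set u := Real.exp t with hu
  have hu0 : 0 < u := Real.exp_pos t
  have hc : 0 < Real.cosh u := Real.cosh_pos u
  have hcs : Real.cosh u ^ 2 - Real.sinh u ^ 2 = 1 := Real.cosh_sq_sub_sinh_sq u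
  unfold teluAux
  rw [← hu]
  field_simp
  linear_combination (t * u) * hcs

lemma teluAux_neg : teluAux (-9) < 0 := by
  unfold teluAux
  set u := Real.exp (-9 : ℝ) with hu
  have hu0 : 0 < u := Real.exp_pos _
  have hu1 : u ≤ 1 := by
    rw [hu]; exact Real.exp_le_one_iff.mpr (by norm_num)
  have hc : 0 < Real.cosh u := Real.cosh_pos u
  have key : Real.sinh u ≤ u * Real.cosh u := sinh_le_mul_cosh hu0.le
  have hch : Real.cosh u < 3 := by
    calc Real.cosh u ≤ Real.exp (u ^ 2 / 2) := Real.cosh_le_exp_half_sq u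
      _ ≤ Real.exp 1 := by
          apply Real.exp_le_exp.mpr; nlinarith
      _ < 3 := by linarith [Real.exp_one_lt_d9]
  have h1 : Real.sinh u * Real.cosh u / u ≤ Real.cosh u ^ 2 := by
    rw [div_le_iff₀ hu0]
    nlinarith [mul_le_mul_of_nonneg_right key hc.le]
  nlinarith
lemma teluAux_pos : 0 < teluAux 0 := by
  unfold teluAux
  rw [Real.exp_zero]
  have h1 : 0 < Real.sinh 1 := Real.sinh_pos_iff.mpr one_pos
  have h2 : 0 < Real.cosh 1 := Real.cosh_pos 1
  positivity

lemma teluAux_continuous : Continuous teluAux := by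
  unfold teluAux
  exact (((Real.continuous_sinh.comp Real.continuous_exp).mul
    (Real.continuous_cosh.comp Real.continuous_exp)).div Real.continuous_exp
    (fun x => Real.exp_ne_zero x)).add continuous_id

theorem telu_unique_critical_point :
    ∃ t₀ : ℝ, t₀ < 0 ∧ deriv telu t₀ = 0 ∧
      (∀ t : ℝ, t < t₀ → deriv telu t < 0) ∧
      (∀ t : ℝ, t₀ < t → 0 < deriv telu t) := by
  have hIVT := intermediate_value_Ioo (by norm_num : (-9 : ℝ) ≤ 0)
    teluAux_continuous.continuousOn
  have h0 : (0 : ℝ) ∈ Set.Ioo (teluAux (-9)) (teluAux 0) :=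
    ⟨teluAux_neg, teluAux_pos⟩
  obtain ⟨t₀, ht₀mem, ht₀⟩ := hIVT h0
  have hfac : ∀ t : ℝ, 0 < Real.exp t / Real.cosh (Real.exp t) ^ 2 := fun t =>
    div_pos (Real.exp_pos t) (pow_pos (Real.cosh_pos _) 2)
  refine ⟨t₀, ht₀mem.2, ?_, ?_, ?_⟩
  · rw [deriv_telu, ht₀, mul_zero]
  · intro t ht
    rw [deriv_telu]
    have : teluAux t < 0 := ht₀ ▸ teluAux_strictMono ht
    exact mul_neg_of_pos_of_neg (hfac t) this
  · intro t ht
    rw [deriv_telu]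
    have : 0 < teluAux t := ht₀ ▸ teluAux_strictMono ht
    exact mul_pos (hfac t) this
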